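/- Let n ≥ 1, d ≥ 2 and k ∈ {1,…,d−1} be integers and let p₁,…,pₙ ∈ ℝ^d. Let X* ∈ ℝ^{d×d} be symmetric with trace(X*) = d−k and 0 ⪯ X* ⪯ I_d, such that (X*, (‖X* pᵢ‖₂)_{i=1}^n) attains the infimum relaxksm(P,k) of the relaxed problem. Let X* = Vᵀ D V be a spectral decomposition with V orthogonal and D diagonal, let q ∈ ℝ^d have entries q_j := ∑_{i=1}^n |(V pᵢ)_j|, let ζ ∈ {0,1}^d be the indicator vector of a set of indices of d−k smallest entries of q, and set E := Vᵀ diag(ζ) V. Then ∑_{i=1}^n ‖E pᵢ‖₂ ≤ √d · ksm(P,k). -/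

import Mathlib

open Matrix

/-- The Euclidean (ℓ₂) norm of a vector in ℝ^d. -/
noncomputable def l2norm {d : ℕ} (u : Fin d → ℝ) : ℝ := Real.sqrt (∑ j, (u j) ^ 2)

lemma dot_self_eq {d : ℕ} (u : Fin d → ℝ) : u ⬝ᵥ u = ∑ j, (u j) ^ 2 := by
  simp [dotProduct, sq]

lemma orth_dot {d : ℕ} (V : Matrix (Fin d) (Fin d) ℝ) (hV' : V * Vᵀ = 1)
    (u : Fin d → ℝ) : ∑ j, ((Vᵀ *ᵥ u) j) ^ 2 = ∑ j, (u j) ^ 2 := by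
  rw [← dot_self_eq, ← dot_self_eq, dotProduct_mulVec, vecMul_transpose,
    mulVec_mulVec, hV', one_mulVec]

lemma conj_mulVec {d : ℕ} (V : Matrix (Fin d) (Fin d) ℝ) (w x : Fin d → ℝ) :
    (Vᵀ * Matrix.diagonal w * V) *ᵥ x = Vᵀ *ᵥ (fun j => w j * (V *ᵥ x) j) := by
  have h : (Vᵀ * Matrix.diagonal w * V) *ᵥ x = Vᵀ *ᵥ (Matrix.diagonal w *ᵥ (V *ᵥ x)) := by
    rw [mulVec_mulVec, mulVec_mulVec]
  have h2 : Matrix.diagonal w *ᵥ (V *ᵥ x) = fun j => w j * (V *ᵥ x) j := by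
    ext j; rw [mulVec_diagonal]
  rw [h, h2]

lemma l2_conj {d : ℕ} (V : Matrix (Fin d) (Fin d) ℝ) (hV' : V * Vᵀ = 1) (w x : Fin d → ℝ) :
    l2norm ((Vᵀ * Matrix.diagonal w * V) *ᵥ x) = Real.sqrt (∑ j, (w j * (V *ᵥ x) j) ^ 2) := by
  rw [conj_mulVec, l2norm, orth_dot V hV']

lemma trace_proj {d : ℕ} (X : Matrix (Fin d) (Fin d) ℝ) (hidem : X * X = X) (hs : Xᵀ = X) :
    X.trace = (X.rank : ℝ) := by
  have hherm : X.IsHermitian := by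
    rw [Matrix.IsHermitian, Matrix.conjTranspose_eq_transpose_of_trivial, hs]
  have heig : ∀ j, hherm.eigenvalues j = 0 ∨ hherm.eigenvalues j = 1 := by
    intro j
    set v : Fin d → ℝ := ⇑(hherm.eigenvectorBasis j) with hv_def
    have hv : X *ᵥ v = hherm.eigenvalues j • v := hherm.mulVec_eigenvectorBasis j
    have hvne : v ≠ 0 := by
      intro h0
      have hb : hherm.eigenvectorBasis j ≠ 0 := hherm.eigenvectorBasis.toBasis.ne_zero j
      apply hb
      apply (EuclideanSpace.equiv (Fin d) ℝ).injective
      ext i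
      simpa using congrFun h0 i
    have h1 : X *ᵥ (X *ᵥ v) = (hherm.eigenvalues j * hherm.eigenvalues j) • v := by
      rw [hv, Matrix.mulVec_smul, hv, smul_smul]
    have h2 : X *ᵥ (X *ᵥ v) = hherm.eigenvalues j • v := by
      rw [Matrix.mulVec_mulVec, hidem, hv]
    have h3 : (hherm.eigenvalues j * hherm.eigenvalues j - hherm.eigenvalues j) • v = 0 := by
      rw [sub_smul, h1.symm.trans h2, sub_self]
    rcases smul_eq_zero.mp h3 with h4 | h4
    · have h5 : hherm.eigenvalues j * (hherm.eigenvalues j - 1) = 0 := by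
        linear_combination h4
      rcases mul_eq_zero.mp h5 with h6 | h6
      · exact Or.inl h6
      · exact Or.inr (by linarith)
    · exact absurd h4 hvne
  have htr : X.trace = ∑ j, hherm.eigenvalues j := by
    conv_lhs => rw [hherm.spectral_theorem]
    rw [Unitary.conjStarAlgAut_apply, Matrix.trace_mul_comm, ← Matrix.mul_assoc,
      (Matrix.mem_unitaryGroup_iff').mp (hherm.eigenvectorUnitary).2, Matrix.one_mul,
      Matrix.trace_diagonal]
    simp
  rw [htr, hherm.rank_eq_card_non_zero_eigs, Fintype.card_subtype,
    ← Finset.sum_filter_ne_zero]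
  have hone : ∀ j ∈ Finset.filter (fun x => hherm.eigenvalues x ≠ 0) Finset.univ,
      hherm.eigenvalues j = 1 := by
    intro j hj
    rcases heig j with h | h
    · exact absurd h (Finset.mem_filter.mp hj).2
    · exact h
  rw [Finset.sum_congr rfl hone, Finset.sum_const, nsmul_eq_mul, mul_one]


/-- If `(X*, (‖X* pᵢ‖₂)ᵢ)` attains the infimum `relaxksm(P,k)` of the
relaxed problem, `X* = Vᵀ D V` is a spectral decomposition, `q` is the vector of
coordinatewise sums of `|(V pᵢ)ⱼ|`, `ζ` the indicator of a set of indices of the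
`d - k` smallest entries of `q`, and `E := Vᵀ diag(ζ) V`, then
`∑ᵢ ‖E pᵢ‖₂ ≤ √d · ksm(P,k)`. -/
theorem stmt_7 (n d k : ℕ) (hn : 1 ≤ n) (hd : 2 ≤ d) (hk1 : 1 ≤ k) (hk2 : k ≤ d - 1)
    (p : Fin n → Fin d → ℝ)
    (Xstar : Matrix (Fin d) (Fin d) ℝ)
    (hsym : Xstarᵀ = Xstar) (htr : Xstar.trace = ((d - k : ℕ) : ℝ))
    (hpsd : Xstar.PosSemidef) (hpsd' : (1 - Xstar).PosSemidef)
    (hopt : ∑ i, l2norm (Xstar.mulVec (p i))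
      = sInf {r : ℝ | ∃ (X : Matrix (Fin d) (Fin d) ℝ) (y : Fin n → ℝ),
          Xᵀ = X ∧ X.trace = ((d - k : ℕ) : ℝ) ∧ X.PosSemidef ∧ (1 - X).PosSemidef ∧
          (∀ i, l2norm (X.mulVec (p i)) ≤ y i) ∧ r = ∑ i, y i})
    (V : Matrix (Fin d) (Fin d) ℝ) (hV : Vᵀ * V = 1)
    (Dvec : Fin d → ℝ) (hdecomp : Xstar = Vᵀ * Matrix.diagonal Dvec * V)
    (q : Fin d → ℝ) (hq : ∀ j, q j = ∑ i, |V.mulVec (p i) j|)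
    (Ind : Finset (Fin d)) (hcard : Ind.card = d - k)
    (hmin : ∀ j ∈ Ind, ∀ j' ∉ Ind, q j ≤ q j')
    (ζ : Fin d → ℝ) (hζ : ∀ j : Fin d, ζ j = if j ∈ Ind then 1 else 0)
    (E : Matrix (Fin d) (Fin d) ℝ) (hE : E = Vᵀ * Matrix.diagonal ζ * V) :
    ∑ i, l2norm (E.mulVec (p i))
      ≤ Real.sqrt d * sInf {r : ℝ | ∃ X : Matrix (Fin d) (Fin d) ℝ,
          X * X = X ∧ Xᵀ = X ∧ X.rank = d - k ∧ r = ∑ i, l2norm (X.mulVec (p i))} := by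
  have hV' : V * Vᵀ = 1 := mul_eq_one_comm.mp hV
  have hdetV : IsUnit V.det := by
    have h : V.det * Vᵀ.det = 1 := by rw [← Matrix.det_mul, hV', Matrix.det_one]
    exact IsUnit.of_mul_eq_one _ h
  have hdetVt : IsUnit Vᵀ.det := by
    have h : Vᵀ.det * V.det = 1 := by rw [← Matrix.det_mul, hV, Matrix.det_one]
    exact IsUnit.of_mul_eq_one _ h
  -- E is a projection of rank d - k
  have hζsq : ∀ j, ζ j * ζ j = ζ j := by intro j; rw [hζ]; split <;> ring
  have hEidem : E * E = E := by
    have key : Matrix.diagonal ζ * Matrix.diagonal ζ = Matrix.diagonal ζ := by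
      rw [Matrix.diagonal_mul_diagonal]
      exact congrArg _ (funext hζsq)
    calc E * E = Vᵀ * Matrix.diagonal ζ * ((V * Vᵀ) * (Matrix.diagonal ζ * V)) := by
          rw [hE]; simp only [Matrix.mul_assoc]
      _ = Vᵀ * Matrix.diagonal ζ * (Matrix.diagonal ζ * V) := by rw [hV', Matrix.one_mul]
      _ = Vᵀ * (Matrix.diagonal ζ * Matrix.diagonal ζ) * V := by simp only [Matrix.mul_assoc]
      _ = E := by rw [key, hE]
  have hEsym : Eᵀ = E := by
    rw [hE]
    simp only [Matrix.transpose_mul, Matrix.transpose_transpose, Matrix.diagonal_transpose]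
    simp only [Matrix.mul_assoc]
  have hErank : E.rank = d - k := by
    rw [hE]
    rw [Matrix.rank_mul_eq_left_of_isUnit_det V _ hdetV,
      Matrix.rank_mul_eq_right_of_isUnit_det Vᵀ _ hdetVt, Matrix.rank_diagonal]
    rw [← hcard]
    have hiff : ∀ j, ζ j ≠ 0 ↔ j ∈ Ind := by intro j; rw [hζ]; split <;> simp_all
    calc Fintype.card {j // ζ j ≠ 0} = Fintype.card {j // j ∈ Ind} :=
          Fintype.card_congr (Equiv.subtypeEquivRight hiff)
      _ = Ind.card := Fintype.card_coe Ind
  -- eigenvalue bounds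
  have hVe : ∀ j, V *ᵥ (Vᵀ *ᵥ Pi.single j 1) = Pi.single j 1 := by
    intro j; rw [Matrix.mulVec_mulVec, hV', Matrix.one_mulVec]
  have hdot : ∀ j (u : Fin d → ℝ), (Vᵀ *ᵥ Pi.single j 1) ⬝ᵥ (Vᵀ *ᵥ u) = u j := by
    intro j u
    rw [Matrix.dotProduct_mulVec, Matrix.vecMul_transpose, hVe]
    simp [dotProduct, Pi.single_apply]
  have hXe : ∀ j, Xstar *ᵥ (Vᵀ *ᵥ Pi.single j 1)
      = Vᵀ *ᵥ (fun m => Dvec m * (Pi.single j 1 : Fin d → ℝ) m) := by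
    intro j
    rw [hdecomp, conj_mulVec, hVe]
  have hDj : ∀ j, (Vᵀ *ᵥ Pi.single j 1) ⬝ᵥ (Xstar *ᵥ (Vᵀ *ᵥ Pi.single j 1)) = Dvec j := by
    intro j
    rw [hXe, hdot]
    simp [Pi.single_apply]
  have hD0 : ∀ j, 0 ≤ Dvec j := by
    intro j
    have h := hpsd.dotProduct_mulVec_nonneg (Vᵀ *ᵥ Pi.single j 1)
    simp only [star_trivial] at h
    rwa [hDj j] at h
  have hee : ∀ j, (Vᵀ *ᵥ Pi.single j 1) ⬝ᵥ (Vᵀ *ᵥ Pi.single j 1) = 1 := by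
    intro j
    have h := hdot j (Pi.single j 1)
    simpa using h
  have hD1 : ∀ j, Dvec j ≤ 1 := by
    intro j
    have h := hpsd'.dotProduct_mulVec_nonneg (Vᵀ *ᵥ Pi.single j 1)
    simp only [star_trivial] at h
    rw [Matrix.sub_mulVec, Matrix.one_mulVec, dotProduct_sub, hee j, hDj j] at h
    linarith
  have htrD : ∑ j, Dvec j = ((d - k : ℕ) : ℝ) := by
    have h1 : Xstar.trace = ∑ j, Dvec j := by
      rw [hdecomp, Matrix.trace_mul_comm, ← Matrix.mul_assoc, hV', Matrix.one_mul,
        Matrix.trace_diagonal]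
    rw [← h1, htr]
  -- step (a)
  have hEnorm : ∀ i, l2norm (E *ᵥ p i) ≤ ∑ j ∈ Ind, |(V *ᵥ p i) j| := by
    intro i
    rw [hE, l2_conj V hV']
    have h1 : ∑ j, (ζ j * (V *ᵥ p i) j) ^ 2 = ∑ j ∈ Ind, ((V *ᵥ p i) j) ^ 2 := by
      have hcase : ∀ j, (ζ j * (V *ᵥ p i) j) ^ 2
          = if j ∈ Ind then ((V *ᵥ p i) j) ^ 2 else 0 := by
        intro j; rw [hζ]; split <;> ring
      rw [Finset.sum_congr rfl (fun j _ => hcase j), Finset.sum_ite_mem, Finset.univ_inter]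
    rw [h1]
    have h2 : ∑ j ∈ Ind, ((V *ᵥ p i) j) ^ 2 ≤ (∑ j ∈ Ind, |(V *ᵥ p i) j|) ^ 2 := by
      have h := Finset.sum_sq_le_sq_sum_of_nonneg
        (f := fun j => |(V *ᵥ p i) j|) (s := Ind) (fun j _ => abs_nonneg _)
      simpa [sq_abs] using h
    calc Real.sqrt (∑ j ∈ Ind, ((V *ᵥ p i) j) ^ 2)
        ≤ Real.sqrt ((∑ j ∈ Ind, |(V *ᵥ p i) j|) ^ 2) := Real.sqrt_le_sqrt h2
      _ = ∑ j ∈ Ind, |(V *ᵥ p i) j| :=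
          Real.sqrt_sq (Finset.sum_nonneg fun j _ => abs_nonneg _)
  have hsumE : ∑ i, l2norm (E *ᵥ p i) ≤ ∑ j ∈ Ind, q j := by
    calc ∑ i, l2norm (E *ᵥ p i) ≤ ∑ i, ∑ j ∈ Ind, |(V *ᵥ p i) j| :=
          Finset.sum_le_sum (fun i _ => hEnorm i)
      _ = ∑ j ∈ Ind, ∑ i, |(V *ᵥ p i) j| := Finset.sum_comm
      _ = ∑ j ∈ Ind, q j := Finset.sum_congr rfl (fun j _ => (hq j).symm)
  -- step (b)
  have hbnd : ∑ j ∈ Ind, q j ≤ ∑ j, Dvec j * q j := by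
    have hne : Ind.Nonempty := Finset.card_pos.mp (by omega)
    obtain ⟨j₀, hj₀, hmax⟩ := Ind.exists_max_image q hne
    have hcardR : (Ind.card : ℝ) = ((d - k : ℕ) : ℝ) := by exact_mod_cast Nat.cast_inj.mpr hcard
    have hsplit : ∑ j ∈ Ind, Dvec j + ∑ j ∈ Indᶜ, Dvec j = ((d - k : ℕ) : ℝ) := by
      rw [Finset.sum_add_sum_compl, htrD]
    have e1 : ∑ j ∈ Ind, (1 - Dvec j) = ∑ j ∈ Indᶜ, Dvec j := by
      have h : ∑ j ∈ Ind, (1 - Dvec j) = (Ind.card : ℝ) - ∑ j ∈ Ind, Dvec j := by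
        rw [Finset.sum_sub_distrib, Finset.sum_const, nsmul_eq_mul, mul_one]
      rw [h, hcardR]; linarith
    have h1 : ∑ j ∈ Ind, (1 - Dvec j) * q j ≤ ∑ j ∈ Ind, (1 - Dvec j) * q j₀ :=
      Finset.sum_le_sum fun j hj => mul_le_mul_of_nonneg_left (hmax j hj) (by linarith [hD1 j])
    have h2 : ∑ j ∈ Indᶜ, Dvec j * q j₀ ≤ ∑ j ∈ Indᶜ, Dvec j * q j :=
      Finset.sum_le_sum fun j hj =>
        mul_le_mul_of_nonneg_left (hmin j₀ hj₀ j (Finset.mem_compl.mp hj)) (hD0 j)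
    have h3 : ∑ j ∈ Ind, (1 - Dvec j) * q j₀ = ∑ j ∈ Indᶜ, Dvec j * q j₀ := by
      rw [← Finset.sum_mul, ← Finset.sum_mul, e1]
    have h4 : ∑ j, Dvec j * q j = ∑ j ∈ Ind, Dvec j * q j + ∑ j ∈ Indᶜ, Dvec j * q j :=
      (Finset.sum_add_sum_compl Ind _).symm
    have h5 : ∑ j ∈ Ind, q j - ∑ j ∈ Ind, Dvec j * q j = ∑ j ∈ Ind, (1 - Dvec j) * q j := by
      rw [← Finset.sum_sub_distrib]
      exact Finset.sum_congr rfl fun j _ => by ring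
    linarith
  -- step (c)
  have hCS : ∀ i, ∑ j, Dvec j * |(V *ᵥ p i) j| ≤ Real.sqrt d * l2norm (Xstar *ᵥ p i) := by
    intro i
    rw [hdecomp, l2_conj V hV']
    have ha0 : ∀ j, 0 ≤ Dvec j * |(V *ᵥ p i) j| := fun j => mul_nonneg (hD0 j) (abs_nonneg _)
    have hcs := Finset.sum_mul_sq_le_sq_mul_sq Finset.univ
      (fun j => Dvec j * |(V *ᵥ p i) j|) (fun _ => 1)
    simp only [mul_one, one_pow] at hcs
    have hsq : ∀ j : Fin d, (Dvec j * |(V *ᵥ p i) j|) ^ 2 = (Dvec j * (V *ᵥ p i) j) ^ 2 := by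
      intro j; rw [mul_pow, mul_pow, sq_abs]
    have hkey : (∑ j, Dvec j * |(V *ᵥ p i) j|) ^ 2
        ≤ (∑ j, (Dvec j * (V *ᵥ p i) j) ^ 2) * d := by
      calc (∑ j, Dvec j * |(V *ᵥ p i) j|) ^ 2
          ≤ (∑ j, (Dvec j * |(V *ᵥ p i) j|) ^ 2) * (∑ _j : Fin d, (1 : ℝ)) := hcs
        _ = (∑ j, (Dvec j * (V *ᵥ p i) j) ^ 2) * d := by
            rw [Finset.sum_congr rfl fun j _ => hsq j]
            simp [Finset.card_univ]
    calc ∑ j, Dvec j * |(V *ᵥ p i) j|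
        = Real.sqrt ((∑ j, Dvec j * |(V *ᵥ p i) j|) ^ 2) :=
          (Real.sqrt_sq (Finset.sum_nonneg fun j _ => ha0 j)).symm
      _ ≤ Real.sqrt ((∑ j, (Dvec j * (V *ᵥ p i) j) ^ 2) * d) := Real.sqrt_le_sqrt hkey
      _ = Real.sqrt d * Real.sqrt (∑ j, (Dvec j * (V *ᵥ p i) j) ^ 2) := by
          rw [Real.sqrt_mul (Finset.sum_nonneg fun j _ => sq_nonneg _), mul_comm]
  have hDq : ∑ j, Dvec j * q j ≤ Real.sqrt d * ∑ i, l2norm (Xstar *ᵥ p i) := by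
    have h1 : ∑ j, Dvec j * q j = ∑ i, ∑ j, Dvec j * |(V *ᵥ p i) j| := by
      calc ∑ j, Dvec j * q j = ∑ j, ∑ i, Dvec j * |(V *ᵥ p i) j| :=
            Finset.sum_congr rfl fun j _ => by rw [hq j, Finset.mul_sum]
        _ = ∑ i, ∑ j, Dvec j * |(V *ᵥ p i) j| := Finset.sum_comm
    rw [h1, Finset.mul_sum]
    exact Finset.sum_le_sum fun i _ => hCS i
  -- step (d): relax infimum is a lower bound for the projection problem
  have hTlb : ∀ r ∈ {r : ℝ | ∃ (X : Matrix (Fin d) (Fin d) ℝ) (y : Fin n → ℝ),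
      Xᵀ = X ∧ X.trace = ((d - k : ℕ) : ℝ) ∧ X.PosSemidef ∧ (1 - X).PosSemidef ∧
      (∀ i, l2norm (X.mulVec (p i)) ≤ y i) ∧ r = ∑ i, y i}, (0 : ℝ) ≤ r := by
    rintro r ⟨X, y, -, -, -, -, hy, rfl⟩
    exact Finset.sum_nonneg fun i _ => le_trans (Real.sqrt_nonneg _) (hy i)
  have hSle : ∀ r ∈ {r : ℝ | ∃ X : Matrix (Fin d) (Fin d) ℝ,
      X * X = X ∧ Xᵀ = X ∧ X.rank = d - k ∧ r = ∑ i, l2norm (X.mulVec (p i))},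
      ∑ i, l2norm (Xstar *ᵥ p i) ≤ r := by
    rintro r ⟨X, hXi, hXs, hXr, rfl⟩
    rw [hopt]
    apply csInf_le ⟨0, hTlb⟩
    have hXpsd : X.PosSemidef := by
      have h : X = Xᴴ * X := by
        rw [Matrix.conjTranspose_eq_transpose_of_trivial, hXs, hXi]
      exact h ▸ Matrix.posSemidef_conjTranspose_mul_self X
    have hIs : (1 - X)ᵀ = 1 - X := by rw [Matrix.transpose_sub, Matrix.transpose_one, hXs]
    have hIidem : (1 - X) * (1 - X) = 1 - X := by
      have h : (1 - X) * (1 - X) = 1 - X - X + X * X := by noncomm_ring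
      rw [h, hXi]; noncomm_ring
    have hIpsd : (1 - X).PosSemidef := by
      have h : (1 - X) = (1 - X)ᴴ * (1 - X) := by
        rw [Matrix.conjTranspose_eq_transpose_of_trivial, hIs, hIidem]
      exact h ▸ Matrix.posSemidef_conjTranspose_mul_self _
    exact ⟨X, fun i => l2norm (X *ᵥ p i), hXs,
      by rw [trace_proj X hXi hXs, hXr], hXpsd, hIpsd, fun i => le_refl _, rfl⟩
  have hSne : Set.Nonempty {r : ℝ | ∃ X : Matrix (Fin d) (Fin d) ℝ,
      X * X = X ∧ Xᵀ = X ∧ X.rank = d - k ∧ r = ∑ i, l2norm (X.mulVec (p i))} :=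
    ⟨∑ i, l2norm (E *ᵥ p i), E, hEidem, hEsym, hErank, rfl⟩
  have hinf : ∑ i, l2norm (Xstar *ᵥ p i)
      ≤ sInf {r : ℝ | ∃ X : Matrix (Fin d) (Fin d) ℝ,
        X * X = X ∧ Xᵀ = X ∧ X.rank = d - k ∧ r = ∑ i, l2norm (X.mulVec (p i))} :=
    le_csInf hSne hSle
  calc ∑ i, l2norm (E *ᵥ p i) ≤ ∑ j ∈ Ind, q j := hsumE
    _ ≤ ∑ j, Dvec j * q j := hbnd
    _ ≤ Real.sqrt d * ∑ i, l2norm (Xstar *ᵥ p i) := hDq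
    _ ≤ Real.sqrt d * sInf {r : ℝ | ∃ X : Matrix (Fin d) (Fin d) ℝ,
          X * X = X ∧ Xᵀ = X ∧ X.rank = d - k ∧ r = ∑ i, l2norm (X.mulVec (p i))} :=
      mul_le_mul_of_nonneg_left hinf (Real.sqrt_nonneg d)
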